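/- Let α, β > 0 and λ ∈ ℝ with λ ≠ 0 and 1 + λα > 0 and 1 + λβ > 0 (i.e., λ > 0 or max(−1/α, −1/β) < λ < 0). Define μ(n) = α for n even and μ(n) = β for n odd. Then for every ε > 0 and every φ : ℕ → ℝ satisfying |φ(n+1) − φ(n) − λ μ(n) φ(n)| ≤ ε μ(n) for all n, there exists x : ℕ → ℝ with x(n+1) = (1 + λ μ(n)) x(n) for all n, such that |φ(n) − x(n)| ≤ ε/|λ| for all n ∈ ℕ. -/

import Mathlib

theorem stmt_13 (α β l : ℝ) (hα : 0 < α) (hβ : 0 < β)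
    (hl : l ≠ 0) (h1 : 0 < 1 + l*α) (h2 : 0 < 1 + l*β)
    (μ : ℕ → ℝ) (hμ : ∀ n, μ n = if Even n then α else β)
    (ε : ℝ) (hε : 0 < ε) (φ : ℕ → ℝ)
    (hφ : ∀ n, |φ (n+1) - φ n - l * μ n * φ n| ≤ ε * μ n) :
    ∃ x : ℕ → ℝ, (∀ n, x (n+1) = (1 + l * μ n) * x n) ∧
      ∀ n, |φ n - x n| ≤ ε / |l| := by
  set P : ℕ → ℝ := fun n => ∏ k ∈ Finset.range n, (1 + l * μ k) with hPdef
  have hμpos : ∀ n, 0 < μ n := by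
    intro n; rw [hμ n]; split <;> assumption
  have hfac : ∀ n, 0 < 1 + l * μ n := by
    intro n; rw [hμ n]; split <;> simpa using ‹_›
  have hP : ∀ n, 0 < P n := by
    intro n; exact Finset.prod_pos fun k _ => hfac k
  have hPs : ∀ n, P (n+1) = (1 + l * μ n) * P n := by
    intro n; rw [hPdef]; simp [Finset.prod_range_succ, mul_comm]
  rcases lt_or_gt_of_ne hl with hneg | hpos
  · -- λ < 0
    refine ⟨fun n => φ 0 * P n, fun n => by show φ 0 * P (n+1) = _; rw [hPs]; ring, ?_⟩
    intro n
    induction n with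
    | zero =>
      show |φ 0 - φ 0 * P 0| ≤ ε / |l|
      have h0 : P 0 = 1 := Finset.prod_range_zero _
      rw [h0, mul_one, sub_self, abs_zero]; positivity
    | succ n ih =>
      have key : φ (n+1) - φ 0 * P (n+1)
          = (φ (n+1) - φ n - l * μ n * φ n) + (1 + l * μ n) * (φ n - φ 0 * P n) := by
        rw [hPs]; ring
      rw [key]
      calc |(φ (n+1) - φ n - l * μ n * φ n) + (1 + l * μ n) * (φ n - φ 0 * P n)|
          ≤ |φ (n+1) - φ n - l * μ n * φ n| + |(1 + l * μ n)| * |φ n - φ 0 * P n| := by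
            rw [← abs_mul]; exact abs_add_le _ _
        _ ≤ ε * μ n + (1 + l * μ n) * (ε / |l|) := by
            apply add_le_add (hφ n)
            rw [abs_of_pos (hfac n)]
            exact mul_le_mul_of_nonneg_left ih (le_of_lt (hfac n))
        _ ≤ ε / |l| := by
            rw [abs_of_neg hneg]
            have hμn := hμpos n
            have hfn := hfac n
            have : ε / (-l) = ε / (-l) := rfl
            have hlne : (-l) ≠ 0 := by linarith
            rw [div_eq_iff hlne] at this
            nlinarith [mul_pos hε hμn, div_nonneg hε.le (neg_pos.mpr hneg).le,
              mul_div_cancel₀ ε hlne]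
  · -- λ > 0
    set y : ℕ → ℝ := fun n => φ n / P n with hydef
    have hstep : ∀ n, |y (n+1) - y n| ≤ (ε / l) * (1 / P n - 1 / P (n+1)) := by
      intro n
      have h1' : y (n+1) - y n = (φ (n+1) - φ n - l * μ n * φ n) / P (n+1) := by
        show φ (n+1) / P (n+1) - φ n / P n = _
        rw [hPs]
        have hn := (hP n).ne'
        have hf := (hfac n).ne'
        field_simp
        ring
      have hP1 : (0:ℝ) < P (n+1) := hP (n+1)
      rw [h1', abs_div, abs_of_pos hP1]
      have heq : (ε / l) * (1 / P n - 1 / P (n+1)) = ε * μ n / P (n+1) := by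
        rw [hPs]
        have := (hP n).ne'
        have := (hfac n).ne'
        field_simp
        ring
      rw [heq]
      gcongr
      exact hφ n
    have hPmono : ∀ n m, n ≤ m → P n ≤ P m := by
      intro n m h
      induction m, h using Nat.le_induction with
      | base => exact le_refl _
      | succ m hm ih =>
        calc P n ≤ P m := ih
          _ ≤ P (m+1) := by
            rw [hPs]
            nlinarith [hP m, hμpos m, mul_pos hpos (hμpos m)]
    have tele : ∀ n m, n ≤ m → |y m - y n| ≤ (ε / l) * (1 / P n - 1 / P m) := by
      intro n m h
      induction m, h using Nat.le_induction with
      | base => simp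
      | succ m hm ih =>
        calc |y (m+1) - y n| ≤ |y (m+1) - y m| + |y m - y n| := abs_sub_le _ _ _
          _ ≤ (ε / l) * (1 / P m - 1 / P (m+1)) + (ε / l) * (1 / P n - 1 / P m) :=
              add_le_add (hstep m) ih
          _ = (ε / l) * (1 / P n - 1 / P (m+1)) := by ring
    -- geometric lower bound on P
    set r : ℝ := 1 + l * min α β with hrdef
    have hr1 : 1 < r := by
      have : (0:ℝ) < min α β := lt_min hα hβ
      nlinarith
    have hrpos : (0:ℝ) < r := by linarith
    have hPge : ∀ n, r ^ n ≤ P n := by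
      intro n
      induction n with
      | zero => simp [hPdef]
      | succ n ih =>
        rw [hPs, pow_succ]
        have hfr : r ≤ 1 + l * μ n := by
          rw [hμ n]
          split
          · have : min α β ≤ α := min_le_left _ _
            nlinarith
          · have : min α β ≤ β := min_le_right _ _
            nlinarith
        calc r ^ n * r ≤ P n * r := by nlinarith [pow_pos hrpos n]
          _ ≤ P n * (1 + l * μ n) := by nlinarith [hP n]
          _ = (1 + l * μ n) * P n := mul_comm _ _
    have hcauchy : CauchySeq y := by
      apply cauchySeq_of_le_geometric (r := r⁻¹) (C := ε / l)
      · rw [inv_lt_one_iff₀]; right; exact hr1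
      · intro n
        rw [dist_eq_norm, Real.norm_eq_abs, abs_sub_comm]
        calc |y (n+1) - y n| ≤ (ε / l) * (1 / P n - 1 / P (n+1)) := hstep n
          _ ≤ (ε / l) * (1 / P n) := by
            have : (0:ℝ) < 1 / P (n+1) := one_div_pos.mpr (hP (n+1))
            have hεl : (0:ℝ) ≤ ε / l := by positivity
            nlinarith
          _ ≤ (ε / l) * r⁻¹ ^ n := by
            have h1 : 1 / P n ≤ 1 / r ^ n := by
              apply one_div_le_one_div_of_le (pow_pos hrpos n) (hPge n)
            have hεl : (0:ℝ) ≤ ε / l := by positivity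
            rw [inv_pow]
            calc (ε / l) * (1 / P n) ≤ (ε / l) * (1 / r ^ n) :=
                mul_le_mul_of_nonneg_left h1 hεl
              _ = (ε / l) * (r ^ n)⁻¹ := by rw [one_div]
    obtain ⟨c, hc⟩ := cauchySeq_tendsto_of_complete hcauchy
    have hbound : ∀ n, |y n - c| ≤ (ε / l) * (1 / P n) := by
      intro n
      have htend : Filter.Tendsto (fun m => |y n - y m|) Filter.atTop (nhds |y n - c|) :=
        ((continuous_abs.tendsto _).comp ((tendsto_const_nhds.sub hc)))
      refine le_of_tendsto htend ?_
      filter_upwards [Filter.eventually_ge_atTop n] with m hm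
      rw [abs_sub_comm]
      calc |y m - y n| ≤ (ε / l) * (1 / P n - 1 / P m) := tele n m hm
        _ ≤ (ε / l) * (1 / P n) := by
          have : (0:ℝ) < 1 / P m := one_div_pos.mpr (hP m)
          have hεl : (0:ℝ) ≤ ε / l := by positivity
          nlinarith
    refine ⟨fun n => c * P n, fun n => by show c * P (n+1) = _; rw [hPs]; ring, ?_⟩
    intro n
    have hne := (hP n).ne'
    have key : φ n - c * P n = (y n - c) * P n := by
      show φ n - c * P n = (φ n / P n - c) * P n
      field_simp
    rw [key, abs_mul, abs_of_pos (hP n)]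
    calc |y n - c| * P n ≤ ((ε / l) * (1 / P n)) * P n :=
        mul_le_mul_of_nonneg_right (hbound n) (hP n).le
      _ = ε / l := by field_simp
      _ = ε / |l| := by rw [abs_of_pos hpos]
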